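/- Let Γ ⊂ ℂ be compact, symmetric in the sense that Γ̃ = { z : z² ∈ Γ }, and let μ be a finite measure on Γ with 0 ∈ Γ. Define the measure μ̃ on Γ̃ as the even measure with μ̃(E) = (1/2) μ(E²) for Borel E contained in one 'half' of Γ̃ (where E² = {z² : z ∈ E}). Then for every n ≥ 1, λ_{2n}(μ̃, 0) = λ_n(μ, 0), where λ denotes the Christoffel function at 0. -/

import Mathlib

open MeasureTheory Polynomial

private lemma coeff_comp_negX (Q : ℂ[X]) (k : ℕ) :
    (Q.comp (-X)).coeff k = (-1) ^ k * Q.coeff k := by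
  induction Q using Polynomial.induction_on' with
  | add p q hp hq => simp [add_comp, hp, hq, mul_add]
  | monomial i a =>
    rw [show (-X : ℂ[X]) = C (-1) * X from by simp]
    rw [monomial_comp, mul_pow, ← C_pow, ← mul_assoc, ← C_mul, coeff_C_mul, coeff_X_pow,
      coeff_monomial]
    rcases eq_or_ne i k with h | h
    · subst h; simp [mul_comm]
    · simp [h, Ne.symm h]

private lemma even_part_eq (Q : ℂ[X]) :
    Q + Q.comp (-X) = 2 * expand ℂ 2 (contract 2 Q) := by
  ext k
  rw [coeff_add, coeff_comp_negX, (map_ofNat C 2).symm, coeff_C_mul,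
    coeff_expand (by norm_num : 0 < 2)]
  rcases Nat.even_or_odd k with hk | hk
  · rw [if_pos hk.two_dvd, coeff_contract two_ne_zero,
      Nat.div_mul_cancel hk.two_dvd, hk.neg_one_pow]
    ring
  · rw [if_neg (by rw [Nat.odd_iff] at hk; omega), hk.neg_one_pow]
    ring

private lemma eval_even_part (Q : ℂ[X]) (z : ℂ) :
    Q.eval z + Q.eval (-z) = 2 * (contract 2 Q).eval (z ^ 2) := by
  have h := congrArg (Polynomial.eval z) (even_part_eq Q)
  simpa [eval_comp, expand_eval] using h

private lemma meas_aux (P : ℂ[X]) :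
    Measurable fun z : ℂ => (‖P.eval z‖₊ : ENNReal) ^ 2 :=
  ((P.continuous.nnnorm.measurable).coe_nnreal_ennreal).pow_const 2

private lemma key_ineq (u v : ℂ) :
    2 * (‖(u + v) / 2‖₊ : ENNReal) ^ 2 ≤ (‖u‖₊ : ENNReal) ^ 2 + (‖v‖₊ : ENNReal) ^ 2 := by
  have h : 2 * ‖(u + v) / 2‖₊ ^ 2 ≤ ‖u‖₊ ^ 2 + ‖v‖₊ ^ 2 := by
    rw [← NNReal.coe_le_coe]
    push_cast [coe_nnnorm]
    have h1 := norm_add_le u v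
    have h2 : ‖(u + v) / 2‖ = ‖u + v‖ / 2 := by
      rw [norm_div]; norm_num
    rw [h2]
    nlinarith [sq_nonneg (‖u‖ - ‖v‖), sq_nonneg (‖u‖ + ‖v‖ - ‖u + v‖), h1,
      norm_nonneg (u + v), norm_nonneg u, norm_nonneg v]
  exact_mod_cast ENNReal.coe_le_coe.2 h

theorem christoffel_double_angle'
    (Γ : Set ℂ) (hΓ : IsCompact Γ) (h0 : (0 : ℂ) ∈ Γ)
    (μ μt : Measure ℂ) [IsFiniteMeasure μ] [IsFiniteMeasure μt]
    (hμsupp : μ Γᶜ = 0) (hμtsupp : μt {z : ℂ | z ^ 2 ∈ Γ}ᶜ = 0)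
    (hpush : Measure.map (fun z : ℂ => z ^ 2) μt = μ)
    (heven : Measure.map (fun z : ℂ => -z) μt = μt)
    (n : ℕ) (hn : 1 ≤ n) :
    (sInf { r : ENNReal | ∃ P : Polynomial ℂ, P.natDegree ≤ 2 * n ∧ P.eval 0 = 1 ∧
      r = ∫⁻ z, (‖P.eval z‖₊ : ENNReal) ^ 2 ∂μt })
    = sInf { r : ENNReal | ∃ P : Polynomial ℂ, P.natDegree ≤ n ∧ P.eval 0 = 1 ∧
      r = ∫⁻ z, (‖P.eval z‖₊ : ENNReal) ^ 2 ∂μ } := by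
  have hsq : ∀ P : ℂ[X], ∫⁻ z, (‖P.eval (z ^ 2)‖₊ : ENNReal) ^ 2 ∂μt
      = ∫⁻ z, (‖P.eval z‖₊ : ENNReal) ^ 2 ∂μ := by
    intro P
    rw [← hpush, lintegral_map (meas_aux P) ((continuous_pow 2).measurable)]
  apply le_antisymm
  · -- λ_{2n}(μt) ≤ λ_n(μ)
    refine le_sInf fun r hr => ?_
    obtain ⟨P, hd, he, hrr⟩ := hr
    refine sInf_le ⟨expand ℂ 2 P, ?_, ?_, ?_⟩
    · rw [natDegree_expand]; omega
    · simpa [expand_eval] using he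
    · rw [hrr, ← hsq P]
      simp_rw [expand_eval]
  · -- λ_n(μ) ≤ λ_{2n}(μt)
    refine le_sInf fun r hr => ?_
    obtain ⟨Q, hd, he, hrr⟩ := hr
    set R := contract 2 Q with hR
    have hRd : R.natDegree ≤ n := by
      refine natDegree_le_iff_coeff_eq_zero.2 fun N hN => ?_
      rw [hR, coeff_contract two_ne_zero]
      exact coeff_eq_zero_of_natDegree_lt (by omega)
    have hRe : R.eval 0 = 1 := by
      have h := eval_even_part Q 0
      rw [neg_zero, he, show (0 : ℂ) ^ 2 = 0 from by norm_num] at h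
      have h2 : (2 : ℂ) * R.eval 0 = 2 * 1 := by rw [hR]; linear_combination -h
      exact mul_left_cancel₀ two_ne_zero h2
    have hle : (∫⁻ z, (‖R.eval z‖₊ : ENNReal) ^ 2 ∂μ) ≤ r := by
      rw [← hsq R]
      have hptw : ∀ z : ℂ, R.eval (z ^ 2) = (Q.eval z + Q.eval (-z)) / 2 := by
        intro z
        have h := eval_even_part Q z
        field_simp [h]
        rw [hR]; linear_combination -h
      have hmul : 2 * ∫⁻ z, (‖R.eval (z ^ 2)‖₊ : ENNReal) ^ 2 ∂μt
          ≤ 2 * ∫⁻ z, (‖Q.eval z‖₊ : ENNReal) ^ 2 ∂μt := by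
        rw [← lintegral_const_mul' _ _ (by norm_num : (2 : ENNReal) ≠ ⊤)]
        calc ∫⁻ z, 2 * (‖R.eval (z ^ 2)‖₊ : ENNReal) ^ 2 ∂μt
            ≤ ∫⁻ z, ((‖Q.eval z‖₊ : ENNReal) ^ 2 + (‖Q.eval (-z)‖₊ : ENNReal) ^ 2) ∂μt := by
              refine lintegral_mono fun z => ?_
              rw [hptw z]
              exact key_ineq _ _
          _ = (∫⁻ z, (‖Q.eval z‖₊ : ENNReal) ^ 2 ∂μt)
              + ∫⁻ z, (‖Q.eval (-z)‖₊ : ENNReal) ^ 2 ∂μt :=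
              lintegral_add_left (meas_aux Q) _
          _ = 2 * ∫⁻ z, (‖Q.eval z‖₊ : ENNReal) ^ 2 ∂μt := by
              have : (∫⁻ z, (‖Q.eval z‖₊ : ENNReal) ^ 2 ∂μt)
                  = ∫⁻ z, (‖Q.eval (-z)‖₊ : ENNReal) ^ 2 ∂μt := by
                conv_lhs => rw [← heven]
                rw [lintegral_map (meas_aux Q) measurable_neg]
              rw [← this, two_mul]
      have := (ENNReal.mul_le_mul_iff_right (by norm_num : (2 : ENNReal) ≠ 0)
        (by norm_num : (2 : ENNReal) ≠ ⊤)).1 hmul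
      rw [hrr]; exact this
    exact le_trans (sInf_le ⟨R, hRd, hRe, rfl⟩) hle

/-- The Christoffel function `λ_n(μ, z₀)`. -/
noncomputable def christoffel (μ : Measure ℂ) (n : ℕ) (z₀ : ℂ) : ENNReal :=
  sInf { r : ENNReal | ∃ P : Polynomial ℂ, P.natDegree ≤ n ∧ P.eval z₀ = 1 ∧
    r = ∫⁻ z, (‖P.eval z‖₊ : ENNReal) ^ 2 ∂μ }

/-- Symmetrization identity: let `μ` be a finite measure on a compact set `Γ ∋ 0` and
let `μ̃` be the even measure on `Γ̃ = {z : z² ∈ Γ}` with `μ̃(E) = (1/2) μ(E²)` for `E`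
in one half of `Γ̃` — equivalently, `μ̃` is invariant under `z ↦ -z` and pushes forward
to `μ` under `z ↦ z²`.  Then `λ_{2n}(μ̃, 0) = λ_n(μ, 0)` for every `n ≥ 1`. -/
theorem christoffel_double_angle
    (Γ : Set ℂ) (hΓ : IsCompact Γ) (h0 : (0 : ℂ) ∈ Γ)
    (μ μt : Measure ℂ) [IsFiniteMeasure μ] [IsFiniteMeasure μt]
    (hμsupp : μ Γᶜ = 0) (hμtsupp : μt {z : ℂ | z ^ 2 ∈ Γ}ᶜ = 0)
    (hpush : Measure.map (fun z : ℂ => z ^ 2) μt = μ)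
    (heven : Measure.map (fun z : ℂ => -z) μt = μt)
    (n : ℕ) (hn : 1 ≤ n) :
    christoffel μt (2 * n) 0 = christoffel μ n 0 :=
  christoffel_double_angle' Γ hΓ h0 μ μt hμsupp hμtsupp hpush heven n hn
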